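/- Let r ≥ 2 and n, t ≥ 1 be integers, let 𝔉_1,…,𝔉_r ⊆ 𝒫([n]) be r-cross t-intersecting families with maximal necessary intersection point a_*, and suppose 𝔉_r \ 𝔉_r(a_*) ≠ ∅. Let k_1,…,k_{r−1} ∈ [n] and suppose that for each i ∈ [r−1] and each F ∈ 𝔉_i(a_*) with |F| ≤ k_i an element s(F) ∈ [n] \ [a_*] with s(F) ∉ F is given. Define, for i ∈ [r−1], 𝔉'_i = 𝔉_i ∪ {F \ {a_*} : F ∈ 𝔉_i(a_*), |F| > k_i} ∪ {σ_{s(F) a_*}(F) : F ∈ 𝔉_i(a_*), |F| ≤ k_i}, and 𝔉'_r = 𝔉_r \ 𝔉_r(a_*). Then 𝔉'_1,…,𝔉'_r are r-cross t-intersecting and every necessary intersection point of 𝔉'_1,…,𝔉'_r is smaller than a_*. -/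

import Mathlib

open Finset

/-- The shift operation `σ_{ij}` on a set `F ⊆ ℕ`. -/
def shift (i j : ℕ) (F : Finset ℕ) : Finset ℕ :=
  if j ∈ F ∧ i ∉ F then insert i (F.erase j) else F

/-- The shift operation on a family. -/
def shiftFam (i j : ℕ) (𝔉 : Finset (Finset ℕ)) : Finset (Finset ℕ) :=
  𝔉.image (shift i j) ∪ 𝔉.filter (fun F => shift i j F ∈ 𝔉)

/-- A family of subsets of `[n] = {1,…,n}` is shifted. -/
def IsShifted (n : ℕ) (𝔉 : Finset (Finset ℕ)) : Prop :=
  ∀ i j : ℕ, 1 ≤ i → i < j → j ≤ n → ∀ F ∈ 𝔉, shift i j F ∈ 𝔉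

/-- The intersection `⋂_{i ∈ s} G i` (for `s` nonempty). -/
def interOn {r : ℕ} (s : Finset (Fin r)) (G : Fin r → Finset ℕ) : Finset ℕ :=
  (s.sup G).filter fun x => ∀ i ∈ s, x ∈ G i

/-- The intersection `⋂_{i} G i`. -/
def interAll {r : ℕ} (G : Fin r → Finset ℕ) : Finset ℕ :=
  interOn Finset.univ G

/-- Families `𝔉 0, …, 𝔉 (r-1)` are `r`-cross `t`-intersecting. -/
def CrossIntersecting {r : ℕ} (t : ℕ) (𝔉 : Fin r → Finset (Finset ℕ)) : Prop :=
  ∀ G : Fin r → Finset ℕ, (∀ i, G i ∈ 𝔉 i) → t ≤ (interAll G).card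

/-- `a` is a necessary intersection point of the cross `t`-intersecting families `𝔉`. -/
def IsNIP {r : ℕ} (t : ℕ) (𝔉 : Fin r → Finset (Finset ℕ)) (a : ℕ) : Prop :=
  ∃ G : Fin r → Finset ℕ, (∀ i, G i ∈ 𝔉 i) ∧
    (Finset.Icc 1 a ∩ interAll G).card = t ∧ a ∈ interAll G

/-- An intersecting family. -/
def Intersecting' (𝔉 : Finset (Finset ℕ)) : Prop :=
  ∀ F ∈ 𝔉, ∀ F' ∈ 𝔉, (F ∩ F').Nonempty

/-- `a` is a necessary intersection point of the intersecting family `𝔉`. -/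
def IsNIP1 (𝔉 : Finset (Finset ℕ)) (a : ℕ) : Prop :=
  ∃ F ∈ 𝔉, ∃ F' ∈ 𝔉, (Finset.Icc 1 a ∩ F ∩ F').card = 1 ∧ a ∈ F ∩ F'

/-- `A_{n,a,t} = {F ⊆ [n] : |F ∩ [a]| ≥ t}`. -/
def famA (n a t : ℕ) : Finset (Finset ℕ) :=
  (Finset.Icc 1 n).powerset.filter (fun F => t ≤ (F ∩ Finset.Icc 1 a).card)

/-- `B_{n,a} = {F ⊆ [n] : [a] ⊆ F}`. -/
def famB (n a : ℕ) : Finset (Finset ℕ) :=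
  (Finset.Icc 1 n).powerset.filter (fun F => Finset.Icc 1 a ⊆ F)

/-- `F ∈ 𝔉 j` depends on `a`, i.e. `F ∈ 𝔉_j(a)`. -/
def FamDependsOn {r : ℕ} (t : ℕ) (𝔉 : Fin r → Finset (Finset ℕ)) (a : ℕ) (j : Fin r)
    (F : Finset ℕ) : Prop :=
  F ∈ 𝔉 j ∧ ∃ G : Fin r → Finset ℕ, (∀ i, i ≠ j → G i ∈ 𝔉 i) ∧
    (Finset.Icc 1 a ∩ F ∩ interOn (Finset.univ.erase j) G).card = t ∧
    a ∈ F ∩ interOn (Finset.univ.erase j) G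

lemma erase_univ_nonempty {r : ℕ} (hr : 2 ≤ r) (i : Fin r) :
    (Finset.univ.erase i).Nonempty := by
  rw [← Finset.card_pos, Finset.card_erase_of_mem (Finset.mem_univ i),
    Finset.card_univ, Fintype.card_fin]
  omega

lemma mem_interOn' {r : ℕ} {s : Finset (Fin r)} (hs : s.Nonempty) (G : Fin r → Finset ℕ)
    (x : ℕ) : x ∈ interOn s G ↔ ∀ i ∈ s, x ∈ G i := by
  unfold interOn
  rw [Finset.mem_filter, Finset.mem_sup]
  obtain ⟨i0, hi0⟩ := hs
  exact ⟨fun h => h.2, fun h => ⟨⟨i0, hi0, h i0 hi0⟩, h⟩⟩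

lemma exists_tth (n t : ℕ) (ht : 1 ≤ t) (S : Finset ℕ) (hS : S ⊆ Finset.Icc 1 n)
    (hcard : t ≤ S.card) : ∃ c ∈ S, (Finset.Icc 1 c ∩ S).card = t := by
  classical
  have hPn : ∃ m, t ≤ (Finset.Icc 1 m ∩ S).card :=
    ⟨n, by rw [Finset.inter_eq_right.mpr hS]; exact hcard⟩
  set c := Nat.find hPn with hcdef
  have hc : t ≤ (Finset.Icc 1 c ∩ S).card := Nat.find_spec hPn
  have hmin : ∀ m, m < c → (Finset.Icc 1 m ∩ S).card < t := by
    intro m hm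
    rw [hcdef] at hm
    have := Nat.find_min hPn hm
    omega
  have hc1 : 1 ≤ c := by
    by_contra h
    push_neg at h
    have hE : Finset.Icc 1 c = ∅ := Finset.Icc_eq_empty (by omega)
    rw [hE, Finset.empty_inter, Finset.card_empty] at hc
    omega
  have hsplit : Finset.Icc 1 c ∩ S ⊆ insert c (Finset.Icc 1 (c - 1) ∩ S) := by
    intro x hx
    rw [Finset.mem_inter, Finset.mem_Icc] at hx
    rw [Finset.mem_insert, Finset.mem_inter, Finset.mem_Icc]
    by_cases hxc : x = c
    · exact Or.inl hxc
    · exact Or.inr ⟨⟨hx.1.1, by omega⟩, hx.2⟩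
  have hprev : (Finset.Icc 1 (c - 1) ∩ S).card < t := hmin (c - 1) (by omega)
  have hle : (Finset.Icc 1 c ∩ S).card ≤ (Finset.Icc 1 (c - 1) ∩ S).card + 1 :=
    le_trans (Finset.card_le_card hsplit) (Finset.card_insert_le _ _)
  have hceq : (Finset.Icc 1 c ∩ S).card = t := by omega
  have hcS : c ∈ S := by
    by_contra hcS
    have hsub2 : Finset.Icc 1 c ∩ S ⊆ Finset.Icc 1 (c - 1) ∩ S := by
      intro x hx
      rw [Finset.mem_inter, Finset.mem_Icc] at hx ⊢
      refine ⟨⟨hx.1.1, ?_⟩, hx.2⟩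
      rcases Nat.lt_or_ge x c with h | h
      · omega
      · exfalso
        have hxc : x = c := by omega
        exact hcS (hxc ▸ hx.2)
    have := Finset.card_le_card hsub2
    omega
  exact ⟨c, hcS, hceq⟩

/-- **Claim 4.2**: the updated families `𝔉'_1, …, 𝔉'_r` are `r`-cross `t`-intersecting
and all of their necessary intersection points are smaller than `a_*`. -/
theorem updated_families_crossIntersecting
    (r n t : ℕ) (hr : 2 ≤ r) (hn : 1 ≤ n) (ht : 1 ≤ t)
    (𝔉 : Fin r → Finset (Finset ℕ)) (hsub : ∀ i, 𝔉 i ⊆ (Finset.Icc 1 n).powerset)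
    (hcross : CrossIntersecting t 𝔉)
    (astar : ℕ) (hNIP : IsNIP t 𝔉 astar) (hmax : ∀ b, IsNIP t 𝔉 b → b ≤ astar)
    (ilast : Fin r) (hilast : ilast = ⟨r - 1, by omega⟩)
    (hFrne : ∃ F ∈ 𝔉 ilast, ¬ FamDependsOn t 𝔉 astar ilast F)
    (k : Fin r → ℕ) (hk : ∀ i, i ≠ ilast → 1 ≤ k i ∧ k i ≤ n)
    (s : Fin r → Finset ℕ → ℕ)
    (hs : ∀ i, i ≠ ilast → ∀ F, FamDependsOn t 𝔉 astar i F → F.card ≤ k i →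
      astar < s i F ∧ s i F ≤ n ∧ s i F ∉ F)
    (𝔉' : Fin r → Finset (Finset ℕ))
    (h𝔉'last : ∀ X, X ∈ 𝔉' ilast ↔ X ∈ 𝔉 ilast ∧ ¬ FamDependsOn t 𝔉 astar ilast X)
    (h𝔉' : ∀ i, i ≠ ilast → ∀ X, X ∈ 𝔉' i ↔
      (X ∈ 𝔉 i ∨
        (∃ F, FamDependsOn t 𝔉 astar i F ∧ k i < F.card ∧ X = F.erase astar) ∨
        (∃ F, FamDependsOn t 𝔉 astar i F ∧ F.card ≤ k i ∧ X = shift (s i F) astar F))) :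
    CrossIntersecting t 𝔉' ∧ ∀ b, IsNIP t 𝔉' b → b < astar := by
  classical
  have hr0 : 0 < r := by omega
  have hmemAll : ∀ (G : Fin r → Finset ℕ) (x : ℕ), x ∈ interAll G ↔ ∀ i, x ∈ G i := by
    intro G x
    rw [interAll, mem_interOn' ⟨⟨0, hr0⟩, Finset.mem_univ _⟩]
    simp
  have hmemErase : ∀ (j : Fin r) (G : Fin r → Finset ℕ) (x : ℕ),
      x ∈ interOn (Finset.univ.erase j) G ↔ ∀ i, i ≠ j → x ∈ G i := by
    intro j G x
    rw [mem_interOn' (erase_univ_nonempty hr j)]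
    constructor
    · intro h i hij; exact h i (Finset.mem_erase.mpr ⟨hij, Finset.mem_univ _⟩)
    · intro h i hi; exact h i (Finset.mem_erase.mp hi).1
  have hastar1 : 1 ≤ astar := by
    obtain ⟨G, hG, -, hmem⟩ := hNIP
    have hsubG := Finset.mem_powerset.mp (hsub ilast (hG ilast))
    have := hsubG ((hmemAll G astar).mp hmem ilast)
    rw [Finset.mem_Icc] at this
    omega
  have hdep_mem : ∀ (j : Fin r) (F : Finset ℕ), FamDependsOn t 𝔉 astar j F → astar ∈ F := by
    rintro j F ⟨-, G, -, -, hmem⟩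
    exact (Finset.mem_inter.mp hmem).1
  have hshift : ∀ (i : Fin r) (F : Finset ℕ), i ≠ ilast → FamDependsOn t 𝔉 astar i F →
      F.card ≤ k i → shift (s i F) astar F = insert (s i F) (F.erase astar) := by
    intro i F hi hdep hcard
    obtain ⟨h1, h2, h3⟩ := hs i hi F hdep hcard
    rw [shift, if_pos ⟨hdep_mem i F hdep, h3⟩]
  have hnotmem : ∀ (i : Fin r), i ≠ ilast → ∀ X ∈ 𝔉' i, astar ∈ X → X ∈ 𝔉 i := by
    intro i hi X hX ha
    rcases (h𝔉' i hi X).mp hX with h | ⟨F, hdep, hc, rfl⟩ | ⟨F, hdep, hc, rfl⟩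
    · exact h
    · exact absurd ha (Finset.notMem_erase _ _)
    · rw [hshift i F hi hdep hc] at ha
      rcases Finset.mem_insert.mp ha with h | h
      · obtain ⟨h1, -, -⟩ := hs i hi F hdep hc; omega
      · exact absurd h (Finset.notMem_erase _ _)
  have getF : ∀ G' : Fin r → Finset ℕ, (∀ i, G' i ∈ 𝔉' i) →
      ∃ F : Fin r → Finset ℕ, (∀ i, F i ∈ 𝔉 i) ∧ (∀ i, (F i).erase astar ⊆ G' i) ∧
        F ilast = G' ilast := by
    intro G' hG'
    have hch : ∀ i : Fin r, ∃ Fi : Finset ℕ, Fi ∈ 𝔉 i ∧ Fi.erase astar ⊆ G' i ∧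
        (i = ilast → Fi = G' i) := by
      intro i
      by_cases hi : i = ilast
      · subst hi
        exact ⟨G' i, ((h𝔉'last _).mp (hG' i)).1, Finset.erase_subset _ _, fun _ => rfl⟩
      · rcases (h𝔉' i hi (G' i)).mp (hG' i) with h | ⟨F, hdep, hc, hx⟩ | ⟨F, hdep, hc, hx⟩
        · exact ⟨G' i, h, Finset.erase_subset _ _, fun h' => absurd h' hi⟩
        · exact ⟨F, hdep.1, by rw [hx], fun h' => absurd h' hi⟩
        · refine ⟨F, hdep.1, ?_, fun h' => absurd h' hi⟩
          rw [hx, hshift i F hi hdep hc]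
          exact Finset.subset_insert _ _
    choose F h1 h2 h3 using hch
    exact ⟨F, h1, h2, h3 ilast rfl⟩
  have keyA : ∀ F : Fin r → Finset ℕ, (∀ i, F i ∈ 𝔉 i) →
      ¬ FamDependsOn t 𝔉 astar ilast (F ilast) →
      t ≤ ((Finset.Icc 1 astar ∩ interAll F).erase astar).card := by
    intro F hF hnd
    have hScard : t ≤ (interAll F).card := hcross F hF
    have hSsub : interAll F ⊆ Finset.Icc 1 n := by
      intro x hx
      exact Finset.mem_powerset.mp (hsub ilast (hF ilast)) ((hmemAll F x).mp hx ilast)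
    obtain ⟨c, hcS, hceq⟩ := exists_tth n t ht (interAll F) hSsub hScard
    have hcNIP : IsNIP t 𝔉 c := ⟨F, hF, hceq, hcS⟩
    have hca : c ≤ astar := hmax c hcNIP
    have hsubc : Finset.Icc 1 c ∩ interAll F ⊆ Finset.Icc 1 astar ∩ interAll F :=
      Finset.inter_subset_inter (Finset.Icc_subset_Icc_right hca) (Finset.Subset.refl _)
    have hT : t ≤ (Finset.Icc 1 astar ∩ interAll F).card := by
      rw [← hceq]; exact Finset.card_le_card hsubc
    by_cases hamem : astar ∈ Finset.Icc 1 astar ∩ interAll F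
    · rcases Nat.lt_or_ge t (Finset.Icc 1 astar ∩ interAll F).card with hlt | hge
      · rw [Finset.card_erase_of_mem hamem]; omega
      · exfalso
        have heq : (Finset.Icc 1 astar ∩ interAll F).card = t := le_antisymm hge hT
        apply hnd
        refine ⟨hF ilast, F, fun i _ => hF i, ?_, ?_⟩
        · have hkey : F ilast ∩ interOn (Finset.univ.erase ilast) F = interAll F := by
            ext x
            rw [Finset.mem_inter, hmemErase, hmemAll]
            constructor
            · rintro ⟨ha, hb⟩ i
              by_cases hi : i = ilast
              · subst hi; exact ha
              · exact hb i hi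
            · intro h; exact ⟨h ilast, fun i _ => h i⟩
          rw [Finset.inter_assoc, hkey, heq]
        · have hAm : astar ∈ interAll F := (Finset.mem_inter.mp hamem).2
          rw [Finset.mem_inter, hmemErase]
          exact ⟨(hmemAll F astar).mp hAm ilast, fun i _ => (hmemAll F astar).mp hAm i⟩
    · rw [Finset.erase_eq_of_notMem hamem]
      exact hT
  constructor
  · intro G' hG'
    obtain ⟨F, hF, hFsub, hFeq⟩ := getF G' hG'
    have hnd : ¬ FamDependsOn t 𝔉 astar ilast (F ilast) := by
      rw [hFeq]; exact ((h𝔉'last _).mp (hG' ilast)).2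
    refine le_trans (keyA F hF hnd) (Finset.card_le_card ?_)
    intro x hx
    rw [Finset.mem_erase, Finset.mem_inter] at hx
    obtain ⟨hxa, hx1, hx2⟩ := hx
    rw [hmemAll] at hx2 ⊢
    intro i
    exact hFsub i (Finset.mem_erase.mpr ⟨hxa, hx2 i⟩)
  · rintro b ⟨G', hG', hDcard, hbmem⟩
    by_contra hb
    push_neg at hb
    by_cases hamem : astar ∈ interAll G'
    · have hmem𝔉 : ∀ i, G' i ∈ 𝔉 i := by
        intro i
        by_cases hi : i = ilast
        · subst hi; exact ((h𝔉'last _).mp (hG' i)).1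
        · exact hnotmem i hi (G' i) (hG' i) ((hmemAll G' astar).mp hamem i)
      have hbNIP : IsNIP t 𝔉 b := ⟨G', hmem𝔉, hDcard, hbmem⟩
      have hba : b = astar := le_antisymm (hmax b hbNIP) hb
      subst hba
      apply ((h𝔉'last (G' ilast)).mp (hG' ilast)).2
      refine ⟨hmem𝔉 ilast, G', fun i _ => hmem𝔉 i, ?_, ?_⟩
      · have hkey : G' ilast ∩ interOn (Finset.univ.erase ilast) G' = interAll G' := by
          ext x
          rw [Finset.mem_inter, hmemErase, hmemAll]
          constructor
          · rintro ⟨ha, hbb⟩ i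
            by_cases hi : i = ilast
            · subst hi; exact ha
            · exact hbb i hi
          · intro h; exact ⟨h ilast, fun i _ => h i⟩
        rw [Finset.inter_assoc, hkey]
        exact hDcard
      · rw [Finset.mem_inter, hmemErase]
        exact ⟨(hmemAll G' b).mp hamem ilast, fun i _ => (hmemAll G' b).mp hamem i⟩
    · obtain ⟨F, hF, hFsub, hFeq⟩ := getF G' hG'
      have hnd : ¬ FamDependsOn t 𝔉 astar ilast (F ilast) := by
        rw [hFeq]; exact ((h𝔉'last _).mp (hG' ilast)).2
      have hK := keyA F hF hnd
      set K := (Finset.Icc 1 astar ∩ interAll F).erase astar with hKdef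
      have hKsub : K ⊆ Finset.Icc 1 b ∩ interAll G' := by
        intro x hx
        rw [hKdef, Finset.mem_erase, Finset.mem_inter] at hx
        obtain ⟨hxa, hx1, hx2⟩ := hx
        rw [Finset.mem_inter]
        constructor
        · rw [Finset.mem_Icc] at hx1 ⊢; omega
        · rw [hmemAll] at hx2 ⊢
          intro i; exact hFsub i (Finset.mem_erase.mpr ⟨hxa, hx2 i⟩)
      have hbK : b ∉ K := by
        intro hbk
        rw [hKdef, Finset.mem_erase, Finset.mem_inter, Finset.mem_Icc] at hbk
        have : b = astar := by omega
        exact hamem (this ▸ hbmem)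
      have hfin : t + 1 ≤ (Finset.Icc 1 b ∩ interAll G').card := by
        have h1 : insert b K ⊆ Finset.Icc 1 b ∩ interAll G' := by
          rw [Finset.insert_subset_iff]
          exact ⟨Finset.mem_inter.mpr ⟨Finset.mem_Icc.mpr ⟨by omega, le_refl b⟩, hbmem⟩,
            hKsub⟩
        have h2 := Finset.card_le_card h1
        rw [Finset.card_insert_of_notMem hbK] at h2
        omega
      omega
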